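/- (Social loss identity for targeted intervention, Proposition 1.) Fix β ≥ 0 and a node i, and let e_i denote the i-th standard basis vector of ℝ^n. The matrix I_n + βL is invertible, and the social loss from neutralizing the shock at agent i satisfies (1_n − e_i)' (I_n + βL)^{−2} (1_n − e_i) = (n−1) − Σ_{j=1}^{n−1} (1 − ω_j) [q_j(i)]², where ω_j = (1 + β λ_j)^{−2}. -/

import Mathlib

open Matrix Finset

/-- Social loss identity for targeted intervention: for `β ≥ 0`
the matrix `I + βL` is invertible, and
`(1 − e_i)' (I + βL)^{−2} (1 − e_i) = (n−1) − ∑_{j=1}^{n−1} (1 − ω_j) q_j(i)²`,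
where `ω_j = (1 + β λ_j)^{−2}` (0-based: `j ∈ range (n−1)`). -/
theorem social_loss_identity
    (n : ℕ) (hn : 0 < n)
    (A : Matrix (Fin n) (Fin n) ℝ)
    (hA01 : ∀ i j, A i j = 0 ∨ A i j = 1)
    (hAsym : ∀ i j, A i j = A j i)
    (hAdiag : ∀ i, A i i = 0)
    (d : Fin n → ℝ) (hd : ∀ i, d i = ∑ j, A i j)
    (L : Matrix (Fin n) (Fin n) ℝ) (hLdef : L = Matrix.diagonal d - A)
    (q : ℕ → Fin n → ℝ) (lam : ℕ → ℝ)
    (heig : ∀ s, s < n → L *ᵥ q s = lam s • q s)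
    (horth : ∀ s, s < n → ∀ t, t < n → ∑ i, q s i * q t i = if s = t then 1 else 0)
    (hdesc : ∀ s t, s ≤ t → t < n → lam t ≤ lam s)
    (hlam0 : lam (n - 1) = 0)
    (hqlast : ∀ i, q (n - 1) i = 1 / Real.sqrt n)
    (β : ℝ) (hβ : 0 ≤ β) (i : Fin n) :
    IsUnit (1 + β • L)
    ∧ (fun j : Fin n => 1 - if j = i then (1 : ℝ) else 0) ⬝ᵥ
        (((1 + β • L) ^ 2)⁻¹ *ᵥ (fun j : Fin n => 1 - if j = i then (1 : ℝ) else 0))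
      = ((n : ℝ) - 1) - ∑ j ∈ Finset.range (n - 1),
          (1 - 1 / (1 + β * lam j) ^ 2) * (q j i) ^ 2 := by
  obtain ⟨m, rfl⟩ : ∃ m, n = m + 1 := ⟨n - 1, (Nat.succ_pred_eq_of_pos hn).symm⟩
  simp only [Nat.add_sub_cancel] at hlam0 hqlast ⊢
  -- basic facts
  have hsq : Real.sqrt (m+1 : ℕ) ≠ 0 := by positivity
  set μ : ℕ → ℝ := fun s => 1 + β * lam s with hμdef
  have hlam_nonneg : ∀ s, s < m+1 → 0 ≤ lam s := by
    intro s hs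
    have := hdesc s m (by omega) (by omega)
    linarith [hlam0 ▸ this]
  have hμpos : ∀ s, s < m+1 → 0 < μ s := by
    intro s hs
    have h1 := mul_nonneg hβ (hlam_nonneg s hs)
    simp only [hμdef]; linarith
  set M : Matrix (Fin (m+1)) (Fin (m+1)) ℝ := 1 + β • L with hMdef
  have hMq : ∀ s, s < m+1 → M *ᵥ q s = μ s • q s := by
    intro s hs
    rw [hMdef, Matrix.add_mulVec, Matrix.smul_mulVec, heig s hs, Matrix.one_mulVec]
    funext j
    simp only [Pi.add_apply, Pi.smul_apply, smul_eq_mul, hμdef]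
    ring
  -- completeness: rows of the eigenvector matrix are orthonormal too
  set P : Matrix (Fin (m+1)) (Fin (m+1)) ℝ := Matrix.of (fun s j : Fin (m+1) => q s j) with hPdef
  have hPPt : P * Pᵀ = 1 := by
    ext s t
    simp only [Matrix.mul_apply, Matrix.transpose_apply, hPdef, Matrix.of_apply,
      Matrix.one_apply]
    rw [horth s s.isLt t t.isLt]
    simp [Fin.val_eq_val]
  have hPtP : Pᵀ * P = 1 := mul_eq_one_comm.mp hPPt
  have hcomp : ∀ j k : Fin (m+1), ∑ s ∈ range (m+1), q s j * q s k = if j = k then 1 else 0 := by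
    intro j k
    have := congrFun (congrFun hPtP j) k
    simp only [Matrix.mul_apply, Matrix.transpose_apply, hPdef, Matrix.of_apply,
      Matrix.one_apply] at this
    rw [← this, ← Fin.sum_univ_eq_sum_range (fun s => q s j * q s k)]
  -- generic spectral product computation
  have hMapply : ∀ p : ℕ → ℝ,
      M * Matrix.of (fun j k : Fin (m+1) => ∑ s ∈ range (m+1), p s * q s j * q s k)
        = Matrix.of (fun j k : Fin (m+1) => ∑ s ∈ range (m+1), (μ s * p s) * q s j * q s k) := by
    intro p
    ext j k
    simp only [Matrix.mul_apply, Matrix.of_apply]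
    calc ∑ x : Fin (m+1), M j x * ∑ s ∈ range (m+1), p s * q s x * q s k
        = ∑ x : Fin (m+1), ∑ s ∈ range (m+1), M j x * (p s * q s x * q s k) := by
          simp [Finset.mul_sum]
      _ = ∑ s ∈ range (m+1), ∑ x : Fin (m+1), M j x * (p s * q s x * q s k) :=
          Finset.sum_comm
      _ = ∑ s ∈ range (m+1), (μ s * p s) * q s j * q s k := by
          refine Finset.sum_congr rfl fun s hs => ?_
          have hjs := congrFun (hMq s (mem_range.mp hs)) j
          simp only [Matrix.mulVec, dotProduct, Pi.smul_apply, smul_eq_mul] at hjs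
          calc ∑ x : Fin (m+1), M j x * (p s * q s x * q s k)
              = (p s * q s k) * ∑ x : Fin (m+1), M j x * q s x := by
                rw [Finset.mul_sum]; exact Finset.sum_congr rfl fun x _ => by ring
            _ = (μ s * p s) * q s j * q s k := by rw [hjs]; ring
  -- explicit inverse of M^2
  set N2 : Matrix (Fin (m+1)) (Fin (m+1)) ℝ :=
    Matrix.of (fun j k => ∑ s ∈ range (m+1), (1 / μ s ^ 2) * q s j * q s k) with hN2def
  have hMN2 : M * N2
      = Matrix.of (fun j k : Fin (m+1) => ∑ s ∈ range (m+1), (1 / μ s) * q s j * q s k) := by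
    rw [hN2def, hMapply]
    ext j k
    simp only [Matrix.of_apply]
    refine Finset.sum_congr rfl fun s hs => ?_
    have h := (hμpos s (mem_range.mp hs)).ne'
    field_simp
  have hMMN2 : M * (M * N2) = 1 := by
    rw [hMN2, hMapply]
    ext j k
    simp only [Matrix.of_apply, Matrix.one_apply]
    rw [← hcomp j k]
    refine Finset.sum_congr rfl fun s hs => ?_
    have h := (hμpos s (mem_range.mp hs)).ne'
    field_simp
  have hM2N2 : M ^ 2 * N2 = 1 := by rw [pow_two, mul_assoc]; exact hMMN2
  have hUnitM : IsUnit M := by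
    rw [Matrix.isUnit_iff_isUnit_det]
    exact IsUnit.of_mul_eq_one (M * N2).det
      (by rw [← Matrix.det_mul, ← mul_assoc, ← pow_two, hM2N2, Matrix.det_one])
  have hinv2 : (M ^ 2)⁻¹ = N2 := Matrix.inv_eq_right_inv hM2N2
  refine ⟨hUnitM, ?_⟩
  rw [hinv2]
  -- coefficients of v in the eigenbasis
  set v : Fin (m+1) → ℝ := fun j => 1 - if j = i then (1:ℝ) else 0 with hvdef
  set c : ℕ → ℝ := fun s => ∑ k : Fin (m+1), q s k * v k with hcdef
  have hcv : ∀ s, c s = (∑ k : Fin (m+1), q s k) - q s i := by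
    intro s
    simp only [hcdef, hvdef, mul_sub, mul_one, Finset.sum_sub_distrib, mul_ite, mul_zero]
    simp
  have hqsum0 : ∀ s, s < m → (∑ k : Fin (m+1), q s k) = 0 := by
    intro s hs
    have h := horth s (by omega) m (by omega)
    rw [if_neg (by omega)] at h
    simp only [hqlast] at h
    have h2 : (∑ k : Fin (m+1), q s k) * (1 / Real.sqrt ((m+1:ℕ))) = 0 := by
      rw [Finset.sum_mul]; exact h
    rcases mul_eq_zero.mp h2 with h3 | h3
    · exact h3
    · exact absurd h3 (by positivity)
  have hcs : ∀ s, s < m → c s = -q s i := by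
    intro s hs; rw [hcv, hqsum0 s hs]; ring
  have hmulself : Real.sqrt ((m+1:ℕ)) * Real.sqrt ((m+1:ℕ)) = ((m+1:ℕ):ℝ) :=
    Real.mul_self_sqrt (by positivity)
  have hsumconst : (∑ k : Fin (m+1), q m k) = ((m+1:ℕ):ℝ) * (1 / Real.sqrt ((m+1:ℕ))) := by
    simp only [hqlast]
    rw [Finset.sum_const, Finset.card_univ, Fintype.card_fin, nsmul_eq_mul]
  have hcm : c m = ((m+1:ℕ):ℝ) / Real.sqrt ((m+1:ℕ)) - 1 / Real.sqrt ((m+1:ℕ)) := by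
    rw [hcv, hsumconst, hqlast]
    ring
  have hcm2 : c m * c m = ((m+1:ℕ):ℝ) - 2 + 1 / ((m+1:ℕ):ℝ) := by
    rw [hcm]
    field_simp
    nlinarith [hmulself]
  have hμm : μ m = 1 := by simp [hμdef, hlam0]
  -- the quadratic form
  have hN2v : N2 *ᵥ v = fun j => ∑ s ∈ range (m+1), (1 / μ s ^ 2 * c s) * q s j := by
    funext j
    simp only [Matrix.mulVec, dotProduct, hN2def, Matrix.of_apply]
    calc ∑ k : Fin (m+1), (∑ s ∈ range (m+1), (1 / μ s ^ 2) * q s j * q s k) * v k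
        = ∑ k : Fin (m+1), ∑ s ∈ range (m+1), (1 / μ s ^ 2) * q s j * (q s k * v k) := by
          refine Finset.sum_congr rfl fun k _ => ?_
          rw [Finset.sum_mul]
          exact Finset.sum_congr rfl fun s _ => by ring
      _ = ∑ s ∈ range (m+1), ∑ k : Fin (m+1), (1 / μ s ^ 2) * q s j * (q s k * v k) :=
          Finset.sum_comm
      _ = ∑ s ∈ range (m+1), (1 / μ s ^ 2 * c s) * q s j := by
          refine Finset.sum_congr rfl fun s _ => ?_
          have hz : (∑ k : Fin (m+1), q s k * v k) = c s := rfl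
          rw [← Finset.mul_sum, hz]
          ring
  have hdot : v ⬝ᵥ (N2 *ᵥ v) = ∑ s ∈ range (m+1), (1 / μ s ^ 2) * (c s * c s) := by
    rw [hN2v]
    simp only [dotProduct]
    calc ∑ j : Fin (m+1), v j * ∑ s ∈ range (m+1), (1 / μ s ^ 2 * c s) * q s j
        = ∑ j : Fin (m+1), ∑ s ∈ range (m+1), (1 / μ s ^ 2 * c s) * (q s j * v j) := by
          refine Finset.sum_congr rfl fun j _ => ?_
          rw [Finset.mul_sum]
          exact Finset.sum_congr rfl fun s _ => by ring
      _ = ∑ s ∈ range (m+1), ∑ j : Fin (m+1), (1 / μ s ^ 2 * c s) * (q s j * v j) :=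
          Finset.sum_comm
      _ = ∑ s ∈ range (m+1), (1 / μ s ^ 2) * (c s * c s) := by
          refine Finset.sum_congr rfl fun s _ => ?_
          have hz : (∑ k : Fin (m+1), q s k * v k) = c s := rfl
          rw [← Finset.mul_sum, hz]
          ring
  -- row normalization
  have hqmi : q m i * q m i = 1 / ((m+1:ℕ):ℝ) := by
    rw [hqlast, div_mul_div_comm, one_mul, hmulself]
  have hrow : ∑ s ∈ range m, q s i ^ 2 = 1 - 1 / ((m+1:ℕ):ℝ) := by
    have h := hcomp i i
    rw [if_pos rfl, Finset.sum_range_succ, hqmi] at h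
    have : ∑ s ∈ range m, q s i ^ 2 = ∑ s ∈ range m, q s i * q s i :=
      Finset.sum_congr rfl fun s _ => sq (q s i)
    rw [this]
    linarith
  -- put everything together
  rw [hdot, Finset.sum_range_succ, hμm]
  have hsum1 : ∑ s ∈ range m, (1 / μ s ^ 2) * (c s * c s)
      = ∑ s ∈ range m, (1 / μ s ^ 2) * q s i ^ 2 := by
    refine Finset.sum_congr rfl fun s hs => ?_
    rw [hcs s (mem_range.mp hs)]
    ring
  have hsum2 : ∑ j ∈ range m, (1 - 1 / (1 + β * lam j) ^ 2) * q j i ^ 2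
      = (∑ j ∈ range m, q j i ^ 2) - ∑ j ∈ range m, (1 / μ j ^ 2) * q j i ^ 2 := by
    rw [← Finset.sum_sub_distrib]
    exact Finset.sum_congr rfl fun j _ => by simp only [hμdef]; ring
  rw [hsum1, hsum2, hrow]
  have hN0 : ((m+1:ℕ):ℝ) ≠ 0 := by positivity
  push_cast at hcm2 ⊢
  rw [one_pow]
  linarith [hcm2]
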